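/- Every shortened array code with modulus q, column-weight r ≥ 2 and girth at least ten has at most √(q − 3/4) + 1/2 retained block-columns in its parity-check matrix. -/

import Mathlib

/-- The Tanner graph of a (possibly shortened) array code with modulus `q`,
block-row labels `a 0, …, a (r-1)` (elements of `ZMod q`), and retained
block-column label set `S ⊆ ZMod q`.  Row vertices are pairs `(i, x)`
(block-row `i`, row `x` within the block); column vertices are pairs `(j, y)`
with `j ∈ S` (block-column labeled `j`, column `y` within the block).
A row `(i, x)` is adjacent to a column `(j, y)` iff the corresponding entry of
the parity-check matrix, i.e. entry `(x, y)` of `P ^ (a i * j)`, equals `1`,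
which happens iff `y = x + a i * j`. -/
def tannerGraph (q r : ℕ) (a : Fin r → ZMod q) (S : Finset (ZMod q)) :
    SimpleGraph ((Fin r × ZMod q) ⊕ ({j // j ∈ S} × ZMod q)) where
  Adj u v :=
    match u, v with
    | Sum.inl (i, x), Sum.inr (j, y) => y = x + a i * (j : ZMod q)
    | Sum.inr (j, y), Sum.inl (i, x) => y = x + a i * (j : ZMod q)
    | _, _ => False
  symm := by
    constructor
    rintro (⟨i, x⟩ | ⟨j, y⟩) (⟨i', x'⟩ | ⟨j', y'⟩) h <;> simp_all
  loopless := by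
    constructor
    rintro (⟨i, x⟩ | ⟨j, y⟩) h <;> simp_all

lemma tg_adj_lr (q r : ℕ) (a : Fin r → ZMod q) (S : Finset (ZMod q))
    (i : Fin r) (x : ZMod q) (j : {j // j ∈ S}) (y : ZMod q) :
    (tannerGraph q r a S).Adj (Sum.inl (i, x)) (Sum.inr (j, y)) ↔ y = x + a i * (j : ZMod q) :=
  Iff.rfl

lemma tg_adj_rl (q r : ℕ) (a : Fin r → ZMod q) (S : Finset (ZMod q))
    (i : Fin r) (x : ZMod q) (j : {j // j ∈ S}) (y : ZMod q) :
    (tannerGraph q r a S).Adj (Sum.inr (j, y)) (Sum.inl (i, x)) ↔ y = x + a i * (j : ZMod q) :=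
  Iff.rfl

lemma cycle8 (q r : ℕ) [Fact q.Prime] (a : Fin r → ZMod q) (S : Finset (ZMod q))
    (i0 i1 : Fin r) (hi01 : i0 ≠ i1) (hi : a i0 ≠ a i1)
    (j1 j2 j3 j4 : ZMod q) (m1 : j1 ∈ S) (m2 : j2 ∈ S) (m3 : j3 ∈ S) (m4 : j4 ∈ S)
    (h12 : j1 ≠ j2) (h34 : j3 ≠ j4) (h13 : j1 ≠ j3)
    (hdiff : j1 - j2 = j3 - j4) :
    ¬ (10 ≤ (tannerGraph q r a S).egirth) := by
  have hδ : a i0 - a i1 ≠ 0 := sub_ne_zero.mpr hi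
  have h24 : j2 ≠ j4 := fun h => h13 (by
    have : j1 - j2 = j3 - j2 := by rw [hdiff, h]
    exact sub_left_injective this)
  set G := tannerGraph q r a S with hG
  have e1 : G.Adj (Sum.inl (i0, (0 : ZMod q))) (Sum.inr (⟨j1, m1⟩, a i0 * j1)) := by
    rw [tg_adj_lr]; ring
  have e2 : G.Adj (Sum.inr (⟨j1, m1⟩, a i0 * j1)) (Sum.inl (i1, (a i0 - a i1) * j1)) := by
    rw [tg_adj_rl]; ring
  have e3 : G.Adj (Sum.inl (i1, (a i0 - a i1) * j1))
      (Sum.inr (⟨j3, m3⟩, (a i0 - a i1) * j1 + a i1 * j3)) := by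
    rw [tg_adj_lr]
  have e4 : G.Adj (Sum.inr (⟨j3, m3⟩, (a i0 - a i1) * j1 + a i1 * j3))
      (Sum.inl (i0, (a i0 - a i1) * (j1 - j3))) := by
    rw [tg_adj_rl]; ring
  have e5 : G.Adj (Sum.inl (i0, (a i0 - a i1) * (j1 - j3)))
      (Sum.inr (⟨j4, m4⟩, (a i0 - a i1) * (j1 - j3) + a i0 * j4)) := by
    rw [tg_adj_lr]
  have e6 : G.Adj (Sum.inr (⟨j4, m4⟩, (a i0 - a i1) * (j1 - j3) + a i0 * j4))
      (Sum.inl (i1, (a i0 - a i1) * (j1 - j3 + j4))) := by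
    rw [tg_adj_rl]; ring
  have e7 : G.Adj (Sum.inl (i1, (a i0 - a i1) * (j1 - j3 + j4)))
      (Sum.inr (⟨j2, m2⟩, (a i0 - a i1) * (j1 - j3 + j4) + a i1 * j2)) := by
    rw [tg_adj_lr]
  have e8 : G.Adj (Sum.inr (⟨j2, m2⟩, (a i0 - a i1) * (j1 - j3 + j4) + a i1 * j2))
      (Sum.inl (i0, (0 : ZMod q))) := by
    rw [tg_adj_rl]
    linear_combination (a i0 - a i1) * hdiff
  let W : G.Walk (Sum.inl (i0, (0 : ZMod q))) (Sum.inl (i0, (0 : ZMod q))) :=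
    .cons e1 (.cons e2 (.cons e3 (.cons e4 (.cons e5 (.cons e6 (.cons e7 (.cons e8 .nil)))))))
  have hii' : i1 ≠ i0 := fun h => hi01 h.symm
  have h42 : j4 ≠ j2 := fun h => h24 h.symm
  have hA : (a i0 - a i1) * j1 ≠ (a i0 - a i1) * (j1 - j3 + j4) := by
    intro h
    have := mul_left_cancel₀ hδ h
    exact h34 (by linear_combination this)
  have hB : (a i0 - a i1) * (j1 - j3) ≠ 0 := by
    intro h
    rcases mul_eq_zero.mp h with h' | h'
    · exact hδ h'
    · exact h13 (sub_eq_zero.mp h')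
  have hC : ¬(j1 = j4 ∧ a i0 * j1 = (a i0 - a i1) * (j1 - j3) + a i0 * j4) := by
    rintro ⟨h, he⟩
    exact hB (by linear_combination (a i0) * h - he)
  have hD : ¬(j3 = j2 ∧ (a i0 - a i1) * j1 + a i1 * j3
      = (a i0 - a i1) * (j1 - j3 + j4) + a i1 * j2) := by
    rintro ⟨h, he⟩
    have hz : (a i0 - a i1) * (j3 - j4) = 0 := by linear_combination he - (a i1) * h
    rcases mul_eq_zero.mp hz with h' | h'
    · exact hδ h'
    · exact h34 (sub_eq_zero.mp h')
  have htail : W.support.tail.Nodup := by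
    simp only [W, SimpleGraph.Walk.support_cons, SimpleGraph.Walk.support_nil,
      List.tail_cons, List.nodup_cons, List.mem_cons, List.not_mem_nil, or_false,
      List.nodup_nil, and_true, Sum.inl.injEq, Sum.inr.injEq, Prod.mk.injEq,
      Subtype.mk.injEq, not_or, Sum.inr_ne_inl, Sum.inl_ne_inr, not_false_iff, true_and]
    simp only [hi01, hii', h12, h13, h34, h42, hA, hB, hC, hD, not_false_iff, false_and, and_false, not_and, and_true, true_and, and_self, not_false_eq_true, implies_true, IsEmpty.forall_iff, forall_true_left]
  have htrail : W.IsTrail := by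
    rw [SimpleGraph.Walk.isTrail_def]
    simp only [W, SimpleGraph.Walk.edges_cons, SimpleGraph.Walk.edges_nil,
      List.nodup_cons, List.mem_cons, List.not_mem_nil, or_false, List.nodup_nil,
      and_true, Sym2.eq_iff, Sum.inl.injEq, Sum.inr.injEq, Prod.mk.injEq,
      Subtype.mk.injEq, not_or, Sum.inr_ne_inl, Sum.inl_ne_inr, false_and, and_false,
      or_self, not_false_iff, true_and, or_false, false_or]
    simp only [hi01, hii', h12, h13, h34, h42, hA, hB, hC, hD, not_false_iff, false_and, and_false, not_and, and_true, true_and, and_self, not_false_eq_true, implies_true, IsEmpty.forall_iff, forall_true_left]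
  have hcyc : W.IsCycle := ⟨⟨htrail, by simp [W]⟩, htail⟩
  intro hgirth
  have := SimpleGraph.le_egirth.mp hgirth _ W hcyc
  rw [show W.length = 8 from rfl] at this
  norm_num at this

/-- Every shortened array code with modulus `q` (an odd prime),
column-weight `r ≥ 2` (distinct block-row labels) and girth at least ten has at
most `√(q - 3/4) + 1/2` retained block-columns in its parity-check matrix. -/
theorem arrayCode_girth_ten_card_le (q r : ℕ) (hq : q.Prime) (hqodd : Odd q)
    (hr : 2 ≤ r) (a : Fin r → ZMod q) (ha : Function.Injective a)
    (S : Finset (ZMod q)) (hgirth : 10 ≤ (tannerGraph q r a S).egirth) :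
    (S.card : ℝ) ≤ Real.sqrt ((q : ℝ) - 3 / 4) + 1 / 2 := by
  haveI := Fact.mk hq
  haveI : NeZero q := ⟨hq.pos.ne'⟩
  have key : S.card * S.card < q + S.card := by
    by_contra hle
    push_neg at hle
    have hcard : S.offDiag.card = S.card * S.card - S.card := Finset.offDiag_card S
    have hlt : (Finset.univ.erase (0 : ZMod q)).card < S.offDiag.card := by
      rw [hcard, Finset.card_erase_of_mem (Finset.mem_univ _), Finset.card_univ, ZMod.card]
      obtain ⟨m, hm⟩ : ∃ m, S.card * S.card = m := ⟨_, rfl⟩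
      rw [hm] at hle ⊢
      have hq2 := hq.two_le
      omega
    have hmaps : ∀ p ∈ S.offDiag, p.1 - p.2 ∈ Finset.univ.erase (0 : ZMod q) := by
      rintro ⟨x, y⟩ hp
      rw [Finset.mem_offDiag] at hp
      exact Finset.mem_erase.mpr ⟨sub_ne_zero.mpr hp.2.2, Finset.mem_univ _⟩
    obtain ⟨p, hp, p', hp', hne, heq⟩ :=
      Finset.exists_ne_map_eq_of_card_lt_of_maps_to hlt hmaps
    rw [Finset.mem_offDiag] at hp hp'
    have h13 : p.1 ≠ p'.1 := by
      intro h
      apply hne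
      have h2 : p.2 = p'.2 := by
        have := heq; rw [h] at this
        linear_combination -this
      exact Prod.ext h h2
    have hi01 : (⟨0, by omega⟩ : Fin r) ≠ ⟨1, by omega⟩ := by simp [Fin.ext_iff]
    exact cycle8 q r a S ⟨0, by omega⟩ ⟨1, by omega⟩ hi01 (ha.ne hi01)
      p.1 p.2 p'.1 p'.2 hp.1 hp.2.1 hp'.1 hp'.2.1 hp.2.2 hp'.2.2 h13 heq hgirth
  rcases Nat.eq_zero_or_pos S.card with h0 | h1
  · rw [h0]
    have := Real.sqrt_nonneg ((q : ℝ) - 3 / 4)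
    push_cast
    linarith
  · have hs : (1 : ℝ) ≤ (S.card : ℝ) := by exact_mod_cast h1
    have hkey : ((S.card : ℝ)) * S.card + 1 ≤ (q : ℝ) + S.card := by
      have : S.card * S.card + 1 ≤ q + S.card := key
      exact_mod_cast this
    have hsq : ((S.card : ℝ) - 1 / 2) ^ 2 ≤ (q : ℝ) - 3 / 4 := by nlinarith
    have h0' : (0 : ℝ) ≤ (S.card : ℝ) - 1 / 2 := by linarith
    have := Real.sqrt_le_sqrt hsq
    rw [Real.sqrt_sq h0'] at this
    linarith
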